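/- Let U = A + iB ∈ U(2d,ℂ) be a unitary matrix whose imaginary part B ∈ ℝ^{2d×2d} is invertible, and set P = B⁻¹A. Then the following are equivalent: (i) there exist symmetric matrices P₁, P₂ ∈ ℝ^{d×d} such that P = diag(P₁, P₂) (i.e. the off-diagonal d×d blocks of P vanish); (ii) there exist W ∈ O(2d,ℝ), V₁, V₂ ∈ O(d,ℝ) and diagonal unitary matrices Σ₁, Σ₂ ∈ U(d,ℂ) such that U = W · diag(Σ₁V₁ᵀ, Σ₂V₂ᵀ); (iii) the unitary matrix UᵀU is block-diagonal, i.e. its off-diagonal d×d blocks vanish. -/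

import Mathlib

open Matrix


lemma map_inj' {m n : Type*} (M N : Matrix m n ℝ)
    (h : M.map (fun x : ℝ => (x:ℂ)) = N.map (fun x : ℝ => (x:ℂ))) : M = N := by
  ext i j
  have := congrFun (congrFun h i) j
  simpa [Matrix.map_apply] using this

lemma mapC_mul {m n p : Type*} [Fintype n] (M : Matrix m n ℝ) (N : Matrix n p ℝ) :
    (M * N).map (fun x : ℝ => (x:ℂ)) =
      M.map (fun x : ℝ => (x:ℂ)) * N.map (fun x : ℝ => (x:ℂ)) := by
  rw [show (fun x:ℝ => (x:ℂ)) = ⇑Complex.ofRealHom from rfl, Matrix.map_mul]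

lemma mapC_one {n : Type*} [Fintype n] [DecidableEq n] :
    (1 : Matrix n n ℝ).map (fun x : ℝ => (x:ℂ)) = 1 := by
  rw [show (fun x:ℝ => (x:ℂ)) = ⇑Complex.ofRealHom from rfl,
    Matrix.map_one _ (map_zero _) (map_one _)]

lemma mapC_transpose {m n : Type*} (M : Matrix m n ℝ) :
    (Mᵀ).map (fun x : ℝ => (x:ℂ)) = (M.map (fun x : ℝ => (x:ℂ)))ᵀ := by
  ext i j; simp [Matrix.map_apply]

lemma mapC_conjTranspose {m n : Type*} (M : Matrix m n ℝ) :
    (M.map (fun x : ℝ => (x:ℂ)))ᴴ = (Mᵀ).map (fun x : ℝ => (x:ℂ)) := by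
  ext i j; simp [Matrix.map_apply, Matrix.conjTranspose_apply]

lemma mapC_fromBlocks {a b c e : Type*} (A : Matrix a b ℝ) (B : Matrix a e ℝ)
    (C : Matrix c b ℝ) (D : Matrix c e ℝ) :
    (fromBlocks A B C D).map (fun x : ℝ => (x:ℂ)) =
      fromBlocks (A.map (fun x : ℝ => (x:ℂ))) (B.map (fun x : ℝ => (x:ℂ)))
        (C.map (fun x : ℝ => (x:ℂ))) (D.map (fun x : ℝ => (x:ℂ))) := by
  ext (i|i) (j|j) <;> simp [Matrix.map_apply, Matrix.fromBlocks]

lemma fromBlocks_sub' {a b c e R : Type*} [Sub R] (A A' : Matrix a b R) (B B' : Matrix a e R)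
    (C C' : Matrix c b R) (D D' : Matrix c e R) :
    fromBlocks A B C D - fromBlocks A' B' C' D' =
      fromBlocks (A - A') (B - B') (C - C') (D - D') := by
  ext (i|i) (j|j) <;> simp [Matrix.fromBlocks]

lemma fromBlocks_add' {a b c e R : Type*} [Add R] (A A' : Matrix a b R) (B B' : Matrix a e R)
    (C C' : Matrix c b R) (D D' : Matrix c e R) :
    fromBlocks A B C D + fromBlocks A' B' C' D' =
      fromBlocks (A + A') (B + B') (C + C') (D + D') := by
  ext (i|i) (j|j) <;> simp [Matrix.fromBlocks]

lemma fromBlocks_smul' {a b c e : Type*} (z : ℂ) (A : Matrix a b ℂ) (B : Matrix a e ℂ)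
    (C : Matrix c b ℂ) (D : Matrix c e ℂ) :
    z • fromBlocks A B C D = fromBlocks (z • A) (z • B) (z • C) (z • D) := by
  ext (i|i) (j|j) <;> simp [Matrix.fromBlocks]

lemma blockInv {d : ℕ} (M N : Matrix (Fin d) (Fin d) ℂ) (hM : IsUnit M.det)
    (hN : IsUnit N.det) :
    (fromBlocks M 0 0 N)⁻¹ = fromBlocks M⁻¹ 0 0 N⁻¹ := by
  apply Matrix.inv_eq_right_inv
  rw [Matrix.fromBlocks_multiply]
  simp [Matrix.mul_nonsing_inv _ hM, Matrix.mul_nonsing_inv _ hN, ← Matrix.fromBlocks_one]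


lemma toEuc_mul {d : ℕ} (X Y : Matrix (Fin d) (Fin d) ℝ) :
    Matrix.toEuclideanLin (X * Y) = Matrix.toEuclideanLin X ∘ₗ Matrix.toEuclideanLin Y := by
  ext v
  simp [Matrix.toEuclideanLin_apply, Matrix.mulVec_mulVec]

lemma simdiag {d : ℕ} (X Y : Matrix (Fin d) (Fin d) ℝ) (hX : Xᵀ = X) (hY : Yᵀ = Y)
    (hcomm : X * Y = Y * X) :
    ∃ V ∈ Matrix.orthogonalGroup (Fin d) ℝ, ∃ a b : Fin d → ℝ,
      X = V * diagonal a * Vᵀ ∧ Y = V * diagonal b * Vᵀ := by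
  classical
  set TX := Matrix.toEuclideanLin X with hTX
  set TY := Matrix.toEuclideanLin Y with hTY
  have hXh : X.IsHermitian := by
    rw [Matrix.IsHermitian, Matrix.conjTranspose_eq_transpose_of_trivial]; exact hX
  have hYh : Y.IsHermitian := by
    rw [Matrix.IsHermitian, Matrix.conjTranspose_eq_transpose_of_trivial]; exact hY
  have hXs : TX.IsSymmetric := Matrix.isHermitian_iff_isSymmetric.mp hXh
  have hYs : TY.IsSymmetric := Matrix.isHermitian_iff_isSymmetric.mp hYh
  have hC : Commute TX TY := by
    unfold Commute SemiconjBy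
    rw [Module.End.mul_eq_comp, Module.End.mul_eq_comp, hTX, hTY, ← toEuc_mul, ← toEuc_mul, hcomm]
  set W : ℝ × ℝ → Submodule ℝ (EuclideanSpace ℝ (Fin d)) :=
    fun i => Module.End.eigenspace TX i.2 ⊓ Module.End.eigenspace TY i.1 with hW
  have hInt : DirectSum.IsInternal W :=
    LinearMap.IsSymmetric.directSum_isInternal_of_commute hXs hYs hC
  have hOrth : OrthogonalFamily ℝ (fun i => W i) fun i => (W i).subtypeₗᵢ :=
    LinearMap.IsSymmetric.orthogonalFamily_eigenspace_inf_eigenspace hXs hYs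
  set bas := hInt.collectedBasis (fun i => (stdOrthonormalBasis ℝ (W i)).toBasis) with hbas
  have hON : Orthonormal ℝ bas :=
    hInt.collectedBasis_orthonormal hOrth (fun i => (stdOrthonormalBasis ℝ (W i)).orthonormal)
  have : Fintype (Σ i : ℝ × ℝ, Fin (Module.finrank ℝ (W i))) :=
    FiniteDimensional.fintypeBasisIndex bas
  have hcard : Fintype.card (Σ i : ℝ × ℝ, Fin (Module.finrank ℝ (W i))) = d := by
    rw [← Module.finrank_eq_card_basis bas]
    simp
  set e := Fintype.equivFinOfCardEq hcard with he
  set v : Fin d → EuclideanSpace ℝ (Fin d) := fun j => bas (e.symm j) with hv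
  set a : Fin d → ℝ := fun j => (e.symm j).1.2 with ha
  set b : Fin d → ℝ := fun j => (e.symm j).1.1 with hb
  have hmem : ∀ j, bas (e.symm j) ∈ W (e.symm j).1 := fun j =>
    hInt.collectedBasis_mem _ _
  have heigX : ∀ j, TX (v j) = a j • v j := fun j =>
    Module.End.mem_eigenspace_iff.mp (hmem j).1
  have heigY : ∀ j, TY (v j) = b j • v j := fun j =>
    Module.End.mem_eigenspace_iff.mp (hmem j).2
  have hONv : Orthonormal ℝ v := hON.comp _ (e.symm.injective)
  set V : Matrix (Fin d) (Fin d) ℝ := Matrix.of (fun k j => v j k) with hV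
  have hVo : Vᵀ * V = 1 := by
    ext i j
    have h := (orthonormal_iff_ite (𝕜 := ℝ)).mp hONv i j
    rw [PiLp.inner_apply] at h
    simpa [Matrix.mul_apply, Matrix.one_apply, hV,
      fun x : Fin d => mul_comm ((v i).ofLp x) ((v j).ofLp x)] using h
  have hVmem : V ∈ Matrix.orthogonalGroup (Fin d) ℝ := by
    rw [Matrix.mem_orthogonalGroup_iff']
    simpa using hVo
  have hVVt : V * Vᵀ = 1 := mul_eq_one_comm.mp hVo
  have key : ∀ (M : Matrix (Fin d) (Fin d) ℝ) (c : Fin d → ℝ),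
      (∀ j, Matrix.toEuclideanLin M (v j) = c j • v j) → M = V * diagonal c * Vᵀ := by
    intro M c hc
    have hMV : M * V = V * diagonal c := by
      ext k j
      have h := congrArg (fun (x : EuclideanSpace ℝ (Fin d)) => x k) (hc j)
      simp only [Matrix.toEuclideanLin_apply, PiLp.toLp_apply, PiLp.smul_apply,
        smul_eq_mul] at h
      rw [Matrix.mul_apply, Matrix.mul_diagonal]
      rw [Matrix.mulVec, dotProduct] at h
      simp only [hV, Matrix.of_apply]
      rw [mul_comm]
      rw [← h]
    calc M = M * (V * Vᵀ) := by rw [hVVt, mul_one]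
    _ = (M * V) * Vᵀ := by rw [mul_assoc]
    _ = V * diagonal c * Vᵀ := by rw [hMV]
  exact ⟨V, hVmem, a, b, key X a heigX, key Y b heigY⟩

lemma symm_unitary_diag {d : ℕ} (S : Matrix (Fin d) (Fin d) ℂ)
    (hSu : S ∈ Matrix.unitaryGroup (Fin d) ℂ) (hSs : Sᵀ = S) :
    ∃ V ∈ Matrix.orthogonalGroup (Fin d) ℝ, ∃ σ : Fin d → ℂ,
      (∀ j, ‖σ j‖ = 1) ∧
      S = V.map (fun x:ℝ => (x:ℂ)) * diagonal (fun j => σ j ^ 2) *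
        (Vᵀ).map (fun x:ℝ => (x:ℂ)) := by
  classical
  set c : ℝ →+* ℂ := Complex.ofRealHom with hc
  set X := S.map Complex.re with hX
  set Y := S.map Complex.im with hY
  have hsymm_entries : ∀ i j, S j i = S i j := by
    intro i j
    have := congrFun (congrFun hSs i) j
    simpa [Matrix.transpose_apply] using this
  have hsplit : S = X.map (fun x:ℝ => (x:ℂ)) + Complex.I • Y.map (fun x:ℝ => (x:ℂ)) := by
    ext i j
    simp only [hX, hY, Matrix.map_apply, Matrix.add_apply, Matrix.smul_apply, smul_eq_mul]
    rw [mul_comm, Complex.re_add_im]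
  have hstar : star S = X.map (fun x:ℝ => (x:ℂ)) - Complex.I • Y.map (fun x:ℝ => (x:ℂ)) := by
    ext i j
    rw [Matrix.star_apply]
    simp only [hX, hY, Matrix.map_apply, Matrix.sub_apply, Matrix.smul_apply, smul_eq_mul]
    rw [hsymm_entries i j]
    rw [RCLike.star_def]
    simp [Complex.ext_iff]
  have h1 : star S * S = 1 := (Matrix.mem_unitaryGroup_iff').mp hSu
  have h2 : S * star S = 1 := Matrix.mem_unitaryGroup_iff.mp hSu
  set Xc := X.map (fun x:ℝ => (x:ℂ)) with hXc
  set Yc := Y.map (fun x:ℝ => (x:ℂ)) with hYc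
  set K := Complex.I • Yc with hK
  have e1 : (Xc - K) * (Xc + K) = 1 := by rw [← hsplit, ← hstar]; exact h1
  have e2 : (Xc + K) * (Xc - K) = 1 := by rw [← hsplit, ← hstar]; exact h2
  have hcomm0 : Xc * K - K * Xc = 0 := by
    have hdiff : (Xc * K - K * Xc) + (Xc * K - K * Xc) = 0 := by
      calc (Xc * K - K * Xc) + (Xc * K - K * Xc)
          = (Xc - K) * (Xc + K) - (Xc + K) * (Xc - K) := by noncomm_ring
        _ = 0 := by rw [e1, e2, sub_self]
    have h2s : (2:ℂ) • (Xc * K - K * Xc) = 0 := by rw [two_smul]; exact hdiff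
    have := smul_eq_zero.mp h2s
    rcases this with h | h
    · norm_num at h
    · exact h
  have hKK : K * K = -(Yc * Yc) := by
    rw [hK, smul_mul_assoc, mul_smul_comm, smul_smul, Complex.I_mul_I, neg_smul, one_smul]
  have esum : Xc * Xc + Yc * Yc = 1 := by
    have expand : (Xc - K) * (Xc + K) = Xc * Xc + (Xc * K - K * Xc) - K * K := by noncomm_ring
    rw [expand, hcomm0, hKK] at e1
    rw [← e1]
    abel
  have ecomm : Xc * Yc = Yc * Xc := by
    have h4 : Complex.I • (Xc * Yc) = Complex.I • (Yc * Xc) := by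
      have := sub_eq_zero.mp hcomm0
      rw [hK, mul_smul_comm, smul_mul_assoc] at this
      exact this
    exact smul_right_injective _ Complex.I_ne_zero h4
  have hXsym : Xᵀ = X := by
    ext i j
    simp only [Matrix.transpose_apply, hX, Matrix.map_apply, hsymm_entries i j]
  have hYsym : Yᵀ = Y := by
    ext i j
    simp only [Matrix.transpose_apply, hY, Matrix.map_apply, hsymm_entries i j]
  have hcommR : X * Y = Y * X := by
    apply map_inj'
    rw [show (fun x:ℝ => (x:ℂ)) = ⇑c from rfl, Matrix.map_mul, Matrix.map_mul]
    exact ecomm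
  have hsumR : X * X + Y * Y = 1 := by
    apply map_inj'
    rw [show (fun x:ℝ => (x:ℂ)) = ⇑c from rfl,
      Matrix.map_add _ (fun a b => map_add c a b), Matrix.map_mul, Matrix.map_mul,
      Matrix.map_one c (map_zero c) (map_one c)]
    exact esum
  obtain ⟨V, hVmem, a, b, hXd, hYd⟩ := simdiag X Y hXsym hYsym hcommR
  have hVtV : Vᵀ * V = 1 := by
    have h := hVmem
    rw [Matrix.mem_orthogonalGroup_iff'] at h
    simpa using h
  have hVVt : V * Vᵀ = 1 := mul_eq_one_comm.mp hVtV
  have conj_mul : ∀ D E : Matrix (Fin d) (Fin d) ℝ,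
      (V * D * Vᵀ) * (V * E * Vᵀ) = V * (D * E) * Vᵀ := by
    intro D E
    calc (V * D * Vᵀ) * (V * E * Vᵀ) = V * D * (Vᵀ * V) * (E * Vᵀ) := by noncomm_ring
      _ = V * (D * E) * Vᵀ := by rw [hVtV, Matrix.mul_one]; noncomm_ring
  have h7 : V * diagonal (fun j => a j ^ 2 + b j ^ 2) * Vᵀ = 1 := by
    have hdd : diagonal (fun j => a j ^ 2 + b j ^ 2)
        = diagonal a * diagonal a + diagonal b * diagonal b := by
      rw [Matrix.diagonal_mul_diagonal, Matrix.diagonal_mul_diagonal, Matrix.diagonal_add]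
      rw [show (fun j => a j ^ 2 + b j ^ 2) = fun i => a i * a i + b i * b i by
        funext i; ring]
    rw [hdd, Matrix.mul_add, Matrix.add_mul, ← conj_mul, ← conj_mul, ← hXd, ← hYd]
    exact hsumR
  have h8 : diagonal (fun j => a j ^ 2 + b j ^ 2) = (1 : Matrix (Fin d) (Fin d) ℝ) := by
    calc diagonal (fun j => a j ^ 2 + b j ^ 2)
        = Vᵀ * (V * diagonal (fun j => a j ^ 2 + b j ^ 2) * Vᵀ) * V := by
          calc diagonal (fun j => a j ^ 2 + b j ^ 2)
              = (Vᵀ * V) * diagonal (fun j => a j ^ 2 + b j ^ 2) * (Vᵀ * V) := by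
                rw [hVtV, Matrix.one_mul, Matrix.mul_one]
            _ = _ := by noncomm_ring
      _ = Vᵀ * 1 * V := by rw [h7]
      _ = 1 := by rw [Matrix.mul_one, hVtV]
  have hab : ∀ j, a j ^ 2 + b j ^ 2 = 1 := by
    intro j
    have := congrFun (congrFun h8 j) j
    simpa [Matrix.diagonal_apply_eq, Matrix.one_apply] using this
  set lam : Fin d → ℂ := fun j => (a j : ℂ) + (b j : ℂ) * Complex.I with hlam
  have hlamnorm : ∀ j, ‖lam j‖ = 1 := by
    intro j
    rw [hlam]
    simp only [Complex.norm_def]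
    rw [Complex.normSq_add_mul_I, hab j, Real.sqrt_one]
  have hlamne : ∀ j, lam j ≠ 0 := by
    intro j h
    have := hlamnorm j
    rw [h] at this
    simp at this
  set σ : Fin d → ℂ := fun j => lam j ^ ((1:ℂ)/2) with hσ
  have hσ2 : ∀ j, σ j ^ 2 = lam j := by
    intro j
    rw [hσ]
    rw [sq, ← Complex.cpow_add _ _ (hlamne j)]
    norm_num
  have hσnorm : ∀ j, ‖σ j‖ = 1 := by
    intro j
    have h9 : ‖σ j‖ ^ 2 = 1 := by
      rw [← norm_pow, hσ2 j, hlamnorm j]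
    have h10 := norm_nonneg (σ j)
    nlinarith
  refine ⟨V, hVmem, σ, hσnorm, ?_⟩
  have hdiag : diagonal (fun j => σ j ^ 2) = diagonal lam := by
    rw [show (fun j => σ j ^ 2) = lam from funext hσ2]
  rw [hdiag]
  have hXcd : Xc = V.map (fun x:ℝ => (x:ℂ)) * diagonal (fun j => (a j : ℂ)) *
      (Vᵀ).map (fun x:ℝ => (x:ℂ)) := by
    rw [hXc, hXd]
    rw [show (fun x:ℝ => (x:ℂ)) = ⇑c from rfl, Matrix.map_mul, Matrix.map_mul,
      Matrix.diagonal_map (map_zero c)]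
    rfl
  have hYcd : Yc = V.map (fun x:ℝ => (x:ℂ)) * diagonal (fun j => (b j : ℂ)) *
      (Vᵀ).map (fun x:ℝ => (x:ℂ)) := by
    rw [hYc, hYd]
    rw [show (fun x:ℝ => (x:ℂ)) = ⇑c from rfl, Matrix.map_mul, Matrix.map_mul,
      Matrix.diagonal_map (map_zero c)]
    rfl
  have hs : Complex.I • (V.map (fun x:ℝ => (x:ℂ)) * diagonal (fun j => ((b j : ℂ))) *
      (Vᵀ).map (fun x:ℝ => (x:ℂ)))
      = V.map (fun x:ℝ => (x:ℂ)) * diagonal (fun j => Complex.I * (b j : ℂ)) *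
        (Vᵀ).map (fun x:ℝ => (x:ℂ)) := by
    rw [show (fun j => Complex.I * (b j : ℂ)) = Complex.I • (fun j => ((b j : ℂ))) from rfl,
      Matrix.diagonal_smul, mul_smul_comm, smul_mul_assoc]
  rw [hsplit, hK, hXcd, hYcd, hs, ← Matrix.add_mul, ← Matrix.mul_add, ← Matrix.diagonal_add]
  congr 1
  funext j
  simp [hlam, mul_comm]

set_option maxHeartbeats 2000000 in
/-- For a unitary `U = A + iB ∈ U(2d,ℂ)` with invertible imaginary part `B`
and `P = B⁻¹A`, the following are equivalent: (i) `P` is block-diagonal with symmetric `d×d`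
diagonal blocks; (ii) `U = W · diag(Σ₁V₁ᵀ, Σ₂V₂ᵀ)` with `W, V₁, V₂` orthogonal and `Σ₁, Σ₂`
diagonal unitary; (iii) `UᵀU` is block-diagonal. -/
theorem block_diagonal_characterization (d : ℕ) (hd : 1 ≤ d)
    (U : Matrix (Fin d ⊕ Fin d) (Fin d ⊕ Fin d) ℂ)
    (hU : U ∈ Matrix.unitaryGroup (Fin d ⊕ Fin d) ℂ)
    (hB : IsUnit (U.map Complex.im).det) :
    ((∃ P₁ P₂ : Matrix (Fin d) (Fin d) ℝ, P₁ᵀ = P₁ ∧ P₂ᵀ = P₂ ∧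
        (U.map Complex.im)⁻¹ * U.map Complex.re = fromBlocks P₁ 0 0 P₂) ↔
      ((Uᵀ * U).toBlocks₁₂ = 0 ∧ (Uᵀ * U).toBlocks₂₁ = 0)) ∧
    ((∃ (W : Matrix (Fin d ⊕ Fin d) (Fin d ⊕ Fin d) ℝ) (V₁ V₂ : Matrix (Fin d) (Fin d) ℝ)
        (σ₁ σ₂ : Fin d → ℂ),
        W ∈ Matrix.orthogonalGroup (Fin d ⊕ Fin d) ℝ ∧
        V₁ ∈ Matrix.orthogonalGroup (Fin d) ℝ ∧ V₂ ∈ Matrix.orthogonalGroup (Fin d) ℝ ∧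
        (∀ j, ‖σ₁ j‖ = 1) ∧ (∀ j, ‖σ₂ j‖ = 1) ∧
        U = W.map (fun x : ℝ => (x : ℂ)) *
          fromBlocks (diagonal σ₁ * (V₁ᵀ).map (fun x : ℝ => (x : ℂ))) 0 0
            (diagonal σ₂ * (V₂ᵀ).map (fun x : ℝ => (x : ℂ)))) ↔
      ((Uᵀ * U).toBlocks₁₂ = 0 ∧ (Uᵀ * U).toBlocks₂₁ = 0)) := by
  classical
  set S := Uᵀ * U with hSdef
  have hU1 : U * star U = 1 := Matrix.mem_unitaryGroup_iff.mp hU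
  have hU2 : star U * U = 1 := Matrix.mem_unitaryGroup_iff'.mp hU
  have hconj : U.map (starRingEnd ℂ) * Uᵀ = 1 := by
    have h := congrArg (fun M : Matrix (Fin d ⊕ Fin d) (Fin d ⊕ Fin d) ℂ =>
      M.map (starRingEnd ℂ)) hU1
    simp only [Matrix.map_mul, Matrix.map_one _ (map_zero _) (map_one _)] at h
    have h2 : (star U).map (starRingEnd ℂ) = Uᵀ := by
      ext i j
      simp [Matrix.star_eq_conjTranspose, Matrix.conjTranspose_apply, Matrix.map_apply]
    rwa [h2] at h
  have hSsym : Sᵀ = S := by rw [hSdef, Matrix.transpose_mul, Matrix.transpose_transpose]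
  have hmaster : U.map (starRingEnd ℂ) * S = U := by
    rw [hSdef, ← mul_assoc, hconj, one_mul]
  have hSU : S ∈ Matrix.unitaryGroup (Fin d ⊕ Fin d) ℂ := by
    have hUt : Uᵀ ∈ Matrix.unitaryGroup (Fin d ⊕ Fin d) ℂ := by
      rw [Matrix.mem_unitaryGroup_iff']
      calc star Uᵀ * Uᵀ = (U * star U)ᵀ := by
            rw [Matrix.transpose_mul, Matrix.star_eq_conjTranspose,
              Matrix.star_eq_conjTranspose]
            congr 1
        _ = 1 := by rw [hU1, Matrix.transpose_one]
    exact mul_mem hUt hU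
  -- real and imaginary parts
  set A := U.map Complex.re with hAdef
  set B := U.map Complex.im with hBdef
  set Ac := A.map (fun x : ℝ => (x:ℂ)) with hAcdef
  set Bc := B.map (fun x : ℝ => (x:ℂ)) with hBcdef
  have hsplit : U = Ac + Complex.I • Bc := by
    ext i j
    simp only [hAcdef, hBcdef, hAdef, hBdef, Matrix.map_apply, Matrix.add_apply,
      Matrix.smul_apply, smul_eq_mul]
    rw [mul_comm, Complex.re_add_im]
  have hconjsplit : U.map (starRingEnd ℂ) = Ac - Complex.I • Bc := by
    ext i j
    simp only [hAcdef, hBcdef, hAdef, hBdef, Matrix.map_apply, Matrix.sub_apply,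
      Matrix.smul_apply, smul_eq_mul]
    simp [Complex.ext_iff]
  have hBcdet : IsUnit Bc.det := by
    have h : Bc.det = Complex.ofRealHom B.det := (RingHom.map_det Complex.ofRealHom B).symm
    rw [h]
    simpa [isUnit_iff_ne_zero, Complex.ofReal_eq_zero] using hB.ne_zero
  have hBBinv : Bc * Bc⁻¹ = 1 := Matrix.mul_nonsing_inv _ hBcdet
  have hBinvB : Bc⁻¹ * Bc = 1 := Matrix.nonsing_inv_mul _ hBcdet
  set Pc := Bc⁻¹ * Ac with hPcdef
  have hBP : Bc * Pc = Ac := by rw [hPcdef, ← mul_assoc, hBBinv, one_mul]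
  have hUfact : U = Bc * (Pc + Complex.I • 1) := by
    rw [mul_add, hBP, mul_smul_comm, mul_one]
    exact hsplit
  have hUcfact : U.map (starRingEnd ℂ) = Bc * (Pc - Complex.I • 1) := by
    rw [mul_sub, hBP, mul_smul_comm, mul_one]
    exact hconjsplit
  have hPS : (Pc - Complex.I • 1) * S = Pc + Complex.I • 1 := by
    have h : Bc * ((Pc - Complex.I • 1) * S) = Bc * (Pc + Complex.I • 1) := by
      rw [← mul_assoc, ← hUcfact, ← hUfact]
      exact hmaster
    have h2 := congrArg (fun Z => Bc⁻¹ * Z) h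
    simp only [← mul_assoc] at h2
    rwa [hBinvB, one_mul, one_mul] at h2
  have hPS2 : (Pc - Complex.I • 1) * (S - 1) = (2 * Complex.I) • 1 := by
    rw [mul_sub, hPS, mul_one]
    module
  have hdetprod : (Pc - Complex.I • 1).det * (S - 1).det =
      (2 * Complex.I) ^ (Fintype.card (Fin d ⊕ Fin d)) := by
    rw [← Matrix.det_mul, hPS2, Matrix.det_smul, Matrix.det_one, mul_one]
  have hunitprod : IsUnit ((Pc - Complex.I • 1).det * (S - 1).det) := by
    rw [hdetprod]
    exact isUnit_iff_ne_zero.mpr (pow_ne_zero _ (by simp [Complex.I_ne_zero]))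
  have hPdet : IsUnit (Pc - Complex.I • 1).det := isUnit_of_mul_isUnit_left hunitprod
  have hSdet : IsUnit (S - 1).det := isUnit_of_mul_isUnit_right hunitprod
  have hPofS : Pc * (S - 1) = Complex.I • (S + 1) := by
    have h := hPS
    rw [sub_mul, smul_mul_assoc, one_mul] at h
    have h2 : Pc * S = Pc + Complex.I • 1 + Complex.I • S := by rw [← h]; abel
    rw [mul_sub, mul_one, h2, smul_add]
    abel
  have hPc_eq : Pc = (Complex.I • (S + 1)) * (S - 1)⁻¹ := by
    have h2 := congrArg (fun Z => Z * (S - 1)⁻¹) hPofS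
    rw [mul_assoc, Matrix.mul_nonsing_inv _ hSdet, mul_one] at h2
    exact h2
  have hS_eq : S = (Pc - Complex.I • 1)⁻¹ * (Pc + Complex.I • 1) := by
    rw [← hPS, ← mul_assoc, Matrix.nonsing_inv_mul _ hPdet, one_mul]
  have hcomm' : (Complex.I • (S + 1)) * (S - 1) = (S - 1) * (Complex.I • (S + 1)) := by
    rw [smul_mul_assoc, mul_smul_comm]
    congr 1
    noncomm_ring
  have hcomminv : (S - 1)⁻¹ * (Complex.I • (S + 1)) = (Complex.I • (S + 1)) * (S - 1)⁻¹ := by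
    calc (S - 1)⁻¹ * (Complex.I • (S + 1))
        = (S - 1)⁻¹ * ((Complex.I • (S + 1)) * ((S - 1) * (S - 1)⁻¹)) := by
          rw [Matrix.mul_nonsing_inv _ hSdet, mul_one]
      _ = (S - 1)⁻¹ * (((Complex.I • (S + 1)) * (S - 1)) * (S - 1)⁻¹) := by
          rw [mul_assoc]
      _ = (S - 1)⁻¹ * (((S - 1) * (Complex.I • (S + 1))) * (S - 1)⁻¹) := by rw [hcomm']
      _ = ((S - 1)⁻¹ * (S - 1)) * ((Complex.I • (S + 1)) * (S - 1)⁻¹) := by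
          simp only [mul_assoc]
      _ = (Complex.I • (S + 1)) * (S - 1)⁻¹ := by
          rw [Matrix.nonsing_inv_mul _ hSdet, one_mul]
  have hPcsym : Pcᵀ = Pc := by
    rw [hPc_eq, Matrix.transpose_mul, Matrix.transpose_nonsing_inv, Matrix.transpose_smul,
      Matrix.transpose_add, Matrix.transpose_sub, Matrix.transpose_one, hSsym]
    exact hcomminv
  have hPmap : (B⁻¹ * A).map (fun x : ℝ => (x:ℂ)) = Pc := by
    have hBinvmap : (B⁻¹).map (fun x : ℝ => (x:ℂ)) = Bc⁻¹ := by
      have h1 : (B⁻¹).map (fun x : ℝ => (x:ℂ)) * Bc = 1 := by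
        rw [hBcdef, ← mapC_mul, Matrix.nonsing_inv_mul _ hB, mapC_one]
      exact (Matrix.inv_eq_left_inv h1).symm
    rw [mapC_mul, hBinvmap, hPcdef, ← hAcdef]
  have hPsymR : (B⁻¹ * A)ᵀ = B⁻¹ * A := by
    apply map_inj'
    rw [mapC_transpose, hPmap]
    exact hPcsym
  constructor
  · constructor
    · rintro ⟨P₁, P₂, _, _, hPb⟩
      have hPcb : Pc = fromBlocks (P₁.map (fun x:ℝ => (x:ℂ))) 0 0
          (P₂.map (fun x:ℝ => (x:ℂ))) := by
        rw [← hPmap, hPb, mapC_fromBlocks]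
        congr 1 <;> ext i j <;> simp [Matrix.map_apply]
      have hPmi : Pc - Complex.I • 1 =
          fromBlocks (P₁.map (fun x:ℝ => (x:ℂ)) - Complex.I • 1) 0 0
            (P₂.map (fun x:ℝ => (x:ℂ)) - Complex.I • 1) := by
        rw [hPcb, show (1 : Matrix (Fin d ⊕ Fin d) (Fin d ⊕ Fin d) ℂ) = fromBlocks 1 0 0 1
          from Matrix.fromBlocks_one.symm, fromBlocks_smul', fromBlocks_sub']
        congr 1 <;> simp
      have hPpi : Pc + Complex.I • 1 =
          fromBlocks (P₁.map (fun x:ℝ => (x:ℂ)) + Complex.I • 1) 0 0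
            (P₂.map (fun x:ℝ => (x:ℂ)) + Complex.I • 1) := by
        rw [hPcb, show (1 : Matrix (Fin d ⊕ Fin d) (Fin d ⊕ Fin d) ℂ) = fromBlocks 1 0 0 1
          from Matrix.fromBlocks_one.symm, fromBlocks_smul', fromBlocks_add']
        congr 1 <;> simp
      have hdetM : IsUnit (P₁.map (fun x:ℝ => (x:ℂ)) - Complex.I • 1).det ∧
          IsUnit (P₂.map (fun x:ℝ => (x:ℂ)) - Complex.I • 1).det := by
        have h := hPdet
        rw [hPmi, Matrix.det_fromBlocks_zero₁₂] at h
        exact ⟨isUnit_of_mul_isUnit_left h, isUnit_of_mul_isUnit_right h⟩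
      have hSb : S = fromBlocks
          ((P₁.map (fun x:ℝ => (x:ℂ)) - Complex.I • 1)⁻¹ *
            (P₁.map (fun x:ℝ => (x:ℂ)) + Complex.I • 1)) 0 0
          ((P₂.map (fun x:ℝ => (x:ℂ)) - Complex.I • 1)⁻¹ *
            (P₂.map (fun x:ℝ => (x:ℂ)) + Complex.I • 1)) := by
        rw [hS_eq, hPmi, hPpi, blockInv _ _ hdetM.1 hdetM.2, Matrix.fromBlocks_multiply]
        congr 1 <;> simp
      constructor
      · rw [hSb]; simp
      · rw [hSb]; simp
    · rintro ⟨h12, h21⟩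
      set S₁ := S.toBlocks₁₁ with hS₁def
      set S₂ := S.toBlocks₂₂ with hS₂def
      have hSb : S = fromBlocks S₁ 0 0 S₂ := by
        have h := Matrix.fromBlocks_toBlocks S
        rw [h12, h21] at h
        exact h.symm
      have hSm1 : S - 1 = fromBlocks (S₁ - 1) 0 0 (S₂ - 1) := by
        rw [hSb, show (1 : Matrix (Fin d ⊕ Fin d) (Fin d ⊕ Fin d) ℂ) = fromBlocks 1 0 0 1
          from Matrix.fromBlocks_one.symm, fromBlocks_sub']
        congr 1 <;> simp
      have hSp1 : S + 1 = fromBlocks (S₁ + 1) 0 0 (S₂ + 1) := by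
        rw [hSb, show (1 : Matrix (Fin d ⊕ Fin d) (Fin d ⊕ Fin d) ℂ) = fromBlocks 1 0 0 1
          from Matrix.fromBlocks_one.symm, fromBlocks_add']
        congr 1 <;> simp
      have hdetS12 : IsUnit (S₁ - 1).det ∧ IsUnit (S₂ - 1).det := by
        have h := hSdet
        rw [hSm1, Matrix.det_fromBlocks_zero₁₂] at h
        exact ⟨isUnit_of_mul_isUnit_left h, isUnit_of_mul_isUnit_right h⟩
      have hPcb : Pc = fromBlocks (Complex.I • (S₁ + 1) * (S₁ - 1)⁻¹) 0 0
          (Complex.I • (S₂ + 1) * (S₂ - 1)⁻¹) := by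
        rw [hPc_eq, hSp1, hSm1, blockInv _ _ hdetS12.1 hdetS12.2, fromBlocks_smul',
          Matrix.fromBlocks_multiply]
        congr 1 <;> simp
      have h12P : (B⁻¹ * A).toBlocks₁₂ = 0 := by
        ext i j
        have h0 : Pc (Sum.inl i) (Sum.inr j) = 0 := by
          rw [hPcb]; simp [Matrix.fromBlocks]
        have h1 := congrFun (congrFun hPmap (Sum.inl i)) (Sum.inr j)
        rw [h0] at h1
        simp only [Matrix.map_apply] at h1
        simp only [Matrix.toBlocks₁₂, Matrix.of_apply, Matrix.zero_apply]
        exact_mod_cast h1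
      have h21P : (B⁻¹ * A).toBlocks₂₁ = 0 := by
        ext i j
        have h0 : Pc (Sum.inr i) (Sum.inl j) = 0 := by
          rw [hPcb]; simp [Matrix.fromBlocks]
        have h1 := congrFun (congrFun hPmap (Sum.inr i)) (Sum.inl j)
        rw [h0] at h1
        simp only [Matrix.map_apply] at h1
        simp only [Matrix.toBlocks₂₁, Matrix.of_apply, Matrix.zero_apply]
        exact_mod_cast h1
      refine ⟨(B⁻¹ * A).toBlocks₁₁, (B⁻¹ * A).toBlocks₂₂, ?_, ?_, ?_⟩
      · ext i j
        have h1 := congrFun (congrFun hPsymR (Sum.inl i)) (Sum.inl j)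
        simp only [Matrix.transpose_apply] at h1
        simp only [Matrix.transpose_apply, Matrix.toBlocks₁₁, Matrix.of_apply]
        exact h1
      · ext i j
        have h1 := congrFun (congrFun hPsymR (Sum.inr i)) (Sum.inr j)
        simp only [Matrix.transpose_apply] at h1
        simp only [Matrix.transpose_apply, Matrix.toBlocks₂₂, Matrix.of_apply]
        exact h1
      · have h := Matrix.fromBlocks_toBlocks (B⁻¹ * A)
        rw [h12P, h21P] at h
        exact h.symm
  · constructor
    · rintro ⟨W, V₁, V₂, σ₁, σ₂, hWo, hV₁o, hV₂o, hn₁, hn₂, hUeq⟩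
      have hWtW : Wᵀ * W = 1 := by
        have h := hWo
        rw [Matrix.mem_orthogonalGroup_iff'] at h
        simpa using h
      have hWcWc : (W.map (fun x:ℝ => (x:ℂ)))ᵀ * (W.map (fun x:ℝ => (x:ℂ))) = 1 := by
        rw [← mapC_transpose, ← mapC_mul, hWtW, mapC_one]
      set D₁ := diagonal σ₁ * (V₁ᵀ).map (fun x:ℝ => (x:ℂ)) with hD₁def
      set D₂ := diagonal σ₂ * (V₂ᵀ).map (fun x:ℝ => (x:ℂ)) with hD₂def
      have hSD : S = (fromBlocks D₁ 0 0 D₂)ᵀ * fromBlocks D₁ 0 0 D₂ := by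
        rw [hSdef, hUeq]
        calc (W.map (fun x:ℝ => (x:ℂ)) * fromBlocks D₁ 0 0 D₂)ᵀ *
              (W.map (fun x:ℝ => (x:ℂ)) * fromBlocks D₁ 0 0 D₂)
            = (fromBlocks D₁ 0 0 D₂)ᵀ *
              (((W.map (fun x:ℝ => (x:ℂ)))ᵀ * (W.map (fun x:ℝ => (x:ℂ)))) *
                fromBlocks D₁ 0 0 D₂) := by
              rw [Matrix.transpose_mul]
              noncomm_ring
          _ = (fromBlocks D₁ 0 0 D₂)ᵀ * fromBlocks D₁ 0 0 D₂ := by rw [hWcWc, one_mul]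
      constructor
      · rw [hSD, Matrix.fromBlocks_transpose, Matrix.fromBlocks_multiply]
        simp
      · rw [hSD, Matrix.fromBlocks_transpose, Matrix.fromBlocks_multiply]
        simp
    · rintro ⟨h12, h21⟩
      set S₁ := S.toBlocks₁₁ with hS₁def
      set S₂ := S.toBlocks₂₂ with hS₂def
      have hSb : S = fromBlocks S₁ 0 0 S₂ := by
        have h := Matrix.fromBlocks_toBlocks S
        rw [h12, h21] at h
        exact h.symm
      have hSstar : star S * S = 1 := Matrix.mem_unitaryGroup_iff'.mp hSU
      have ht11 : (1 : Matrix (Fin d ⊕ Fin d) (Fin d ⊕ Fin d) ℂ).toBlocks₁₁ = 1 := by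
        rw [← Matrix.fromBlocks_one, Matrix.toBlocks_fromBlocks₁₁]
      have ht22 : (1 : Matrix (Fin d ⊕ Fin d) (Fin d ⊕ Fin d) ℂ).toBlocks₂₂ = 1 := by
        rw [← Matrix.fromBlocks_one, Matrix.toBlocks_fromBlocks₂₂]
      have hSblocksU : fromBlocks (S₁ᴴ * S₁ + 0ᴴ * 0) (S₁ᴴ * 0 + 0ᴴ * S₂)
          (0ᴴ * S₁ + S₂ᴴ * 0) (0ᴴ * 0 + S₂ᴴ * S₂) = 1 := by
        have h : (fromBlocks S₁ 0 0 S₂)ᴴ * fromBlocks S₁ 0 0 S₂ = 1 := by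
          rw [← hSb, ← Matrix.star_eq_conjTranspose]
          exact hSstar
        rw [Matrix.fromBlocks_conjTranspose, Matrix.fromBlocks_multiply] at h
        exact h
      have hS₁u : S₁ ∈ Matrix.unitaryGroup (Fin d) ℂ := by
        rw [Matrix.mem_unitaryGroup_iff', Matrix.star_eq_conjTranspose]
        have h := congrArg Matrix.toBlocks₁₁ hSblocksU
        rw [Matrix.toBlocks_fromBlocks₁₁, ht11] at h
        simpa using h
      have hS₂u : S₂ ∈ Matrix.unitaryGroup (Fin d) ℂ := by
        rw [Matrix.mem_unitaryGroup_iff', Matrix.star_eq_conjTranspose]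
        have h := congrArg Matrix.toBlocks₂₂ hSblocksU
        rw [Matrix.toBlocks_fromBlocks₂₂, ht22] at h
        simpa using h
      have hS₁s : S₁ᵀ = S₁ := by
        ext i j
        have h1 := congrFun (congrFun hSsym (Sum.inl i)) (Sum.inl j)
        simp only [Matrix.transpose_apply] at h1 ⊢
        simpa [hS₁def, Matrix.toBlocks₁₁] using h1
      have hS₂s : S₂ᵀ = S₂ := by
        ext i j
        have h1 := congrFun (congrFun hSsym (Sum.inr i)) (Sum.inr j)
        simp only [Matrix.transpose_apply] at h1 ⊢
        simpa [hS₂def, Matrix.toBlocks₂₂] using h1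
      obtain ⟨V₁, hV₁o, σ₁, hσ₁n, hS₁eq⟩ := symm_unitary_diag S₁ hS₁u hS₁s
      obtain ⟨V₂, hV₂o, σ₂, hσ₂n, hS₂eq⟩ := symm_unitary_diag S₂ hS₂u hS₂s
      have bf : ∀ V : Matrix (Fin d) (Fin d) ℝ, V ∈ Matrix.orthogonalGroup (Fin d) ℝ →
          ∀ σ : Fin d → ℂ, (∀ j, ‖σ j‖ = 1) →
          (diagonal σ * (Vᵀ).map (fun x:ℝ => (x:ℂ)))ᴴ *
            (diagonal σ * (Vᵀ).map (fun x:ℝ => (x:ℂ))) = 1 ∧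
          (diagonal σ * (Vᵀ).map (fun x:ℝ => (x:ℂ))) *
            (diagonal σ * (Vᵀ).map (fun x:ℝ => (x:ℂ)))ᴴ = 1 ∧
          (diagonal σ * (Vᵀ).map (fun x:ℝ => (x:ℂ)))ᵀ *
            (diagonal σ * (Vᵀ).map (fun x:ℝ => (x:ℂ))) =
            V.map (fun x:ℝ => (x:ℂ)) * diagonal (fun j => σ j ^ 2) *
              (Vᵀ).map (fun x:ℝ => (x:ℂ)) := by
        intro V hVo σ hσ
        have hVtV : Vᵀ * V = 1 := by
          have h := hVo
          rw [Matrix.mem_orthogonalGroup_iff'] at h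
          simpa using h
        have hVVt : V * Vᵀ = 1 := mul_eq_one_comm.mp hVtV
        have hc1 : (V.map (fun x:ℝ => (x:ℂ)))ᵀ * V.map (fun x:ℝ => (x:ℂ)) = 1 := by
          rw [← mapC_transpose, ← mapC_mul, hVtV, mapC_one]
        have hc2 : V.map (fun x:ℝ => (x:ℂ)) * (V.map (fun x:ℝ => (x:ℂ)))ᵀ = 1 := by
          rw [← mapC_transpose, ← mapC_mul, hVVt, mapC_one]
        have hone : ∀ j : Fin d, star (σ j) * σ j = 1 := by
          intro j
          rw [mul_comm, Complex.star_def, Complex.mul_conj, Complex.normSq_eq_norm_sq,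
            hσ j]
          norm_num
        have hone' : ∀ j : Fin d, σ j * star (σ j) = 1 := fun j => by
          rw [mul_comm]; exact hone j
        have hsd : diagonal (fun j => star (σ j)) * diagonal σ = 1 := by
          rw [Matrix.diagonal_mul_diagonal,
            show (fun j => star (σ j) * σ j) = fun _ => (1:ℂ) from funext hone,
            Matrix.diagonal_one]
        have hsd' : diagonal σ * diagonal (fun j => star (σ j)) = 1 := by
          rw [Matrix.diagonal_mul_diagonal,
            show (fun j => σ j * star (σ j)) = fun _ => (1:ℂ) from funext hone',
            Matrix.diagonal_one]
        have hdsq : diagonal σ * diagonal σ = diagonal (fun j => σ j ^ 2) := by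
          rw [Matrix.diagonal_mul_diagonal,
            show (fun j => σ j * σ j) = fun j => σ j ^ 2 from
              funext fun j => (pow_two (σ j)).symm]
        have hDH : (diagonal σ * (Vᵀ).map (fun x:ℝ => (x:ℂ)))ᴴ =
            V.map (fun x:ℝ => (x:ℂ)) * diagonal (fun j => star (σ j)) := by
          rw [Matrix.conjTranspose_mul, mapC_conjTranspose, Matrix.transpose_transpose,
            Matrix.diagonal_conjTranspose]
          rfl
        have hDT : (diagonal σ * (Vᵀ).map (fun x:ℝ => (x:ℂ)))ᵀ =
            V.map (fun x:ℝ => (x:ℂ)) * diagonal σ := by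
          rw [Matrix.transpose_mul, Matrix.diagonal_transpose, mapC_transpose,
            Matrix.transpose_transpose]
        refine ⟨?_, ?_, ?_⟩
        · rw [hDH]
          calc V.map (fun x:ℝ => (x:ℂ)) * diagonal (fun j => star (σ j)) *
                (diagonal σ * (Vᵀ).map (fun x:ℝ => (x:ℂ)))
              = V.map (fun x:ℝ => (x:ℂ)) *
                ((diagonal (fun j => star (σ j)) * diagonal σ) *
                  (Vᵀ).map (fun x:ℝ => (x:ℂ))) := by noncomm_ring
            _ = V.map (fun x:ℝ => (x:ℂ)) * (Vᵀ).map (fun x:ℝ => (x:ℂ)) := by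
                rw [hsd, one_mul]
            _ = 1 := by rw [mapC_transpose]; exact hc2
        · rw [hDH]
          calc diagonal σ * (Vᵀ).map (fun x:ℝ => (x:ℂ)) *
                (V.map (fun x:ℝ => (x:ℂ)) * diagonal (fun j => star (σ j)))
              = diagonal σ * (((Vᵀ).map (fun x:ℝ => (x:ℂ)) * V.map (fun x:ℝ => (x:ℂ))) *
                  diagonal (fun j => star (σ j))) := by noncomm_ring
            _ = diagonal σ * diagonal (fun j => star (σ j)) := by
                rw [mapC_transpose, hc1, one_mul]
            _ = 1 := hsd'
        · rw [hDT]
          calc V.map (fun x:ℝ => (x:ℂ)) * diagonal σ *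
                (diagonal σ * (Vᵀ).map (fun x:ℝ => (x:ℂ)))
              = V.map (fun x:ℝ => (x:ℂ)) * ((diagonal σ * diagonal σ) *
                  (Vᵀ).map (fun x:ℝ => (x:ℂ))) := by noncomm_ring
            _ = V.map (fun x:ℝ => (x:ℂ)) * diagonal (fun j => σ j ^ 2) *
                  (Vᵀ).map (fun x:ℝ => (x:ℂ)) := by rw [hdsq]; noncomm_ring
      obtain ⟨hE₁u, hE₁u', hE₁t⟩ := bf V₁ hV₁o σ₁ hσ₁n
      obtain ⟨hE₂u, hE₂u', hE₂t⟩ := bf V₂ hV₂o σ₂ hσ₂n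
      set E₁ := diagonal σ₁ * (V₁ᵀ).map (fun x:ℝ => (x:ℂ)) with hE₁def
      set E₂ := diagonal σ₂ * (V₂ᵀ).map (fun x:ℝ => (x:ℂ)) with hE₂def
      set D := fromBlocks E₁ 0 0 E₂ with hDdef
      have hDHD : Dᴴ * D = 1 := by
        rw [hDdef, Matrix.fromBlocks_conjTranspose, Matrix.fromBlocks_multiply,
          show (1 : Matrix (Fin d ⊕ Fin d) (Fin d ⊕ Fin d) ℂ) = fromBlocks 1 0 0 1
            from Matrix.fromBlocks_one.symm]
        simp only [Matrix.conjTranspose_zero, Matrix.mul_zero, Matrix.zero_mul, add_zero,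
          zero_add, hE₁u, hE₂u]
      have hDDH : D * Dᴴ = 1 := by
        rw [hDdef, Matrix.fromBlocks_conjTranspose, Matrix.fromBlocks_multiply,
          show (1 : Matrix (Fin d ⊕ Fin d) (Fin d ⊕ Fin d) ℂ) = fromBlocks 1 0 0 1
            from Matrix.fromBlocks_one.symm]
        simp only [Matrix.conjTranspose_zero, Matrix.mul_zero, Matrix.zero_mul, add_zero,
          zero_add, hE₁u', hE₂u']
      have hDtD : Dᵀ * D = S := by
        rw [hDdef, Matrix.fromBlocks_transpose, Matrix.fromBlocks_multiply]
        rw [hE₁t, hE₂t, ← hS₁eq, ← hS₂eq, hSb]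
        simp only [Matrix.transpose_zero, Matrix.mul_zero, Matrix.zero_mul, add_zero, zero_add]
      set Wc := U * Dᴴ with hWcdef
      have hUW : U = Wc * D := by
        rw [hWcdef, mul_assoc, hDHD, mul_one]
      have hWct : Wcᵀ * Wc = 1 := by
        calc Wcᵀ * Wc = ((Dᴴ)ᵀ * Uᵀ) * (U * Dᴴ) := by rw [hWcdef, Matrix.transpose_mul]
          _ = (Dᴴ)ᵀ * ((Uᵀ * U) * Dᴴ) := by simp only [mul_assoc]
          _ = (Dᴴ)ᵀ * ((Dᵀ * D) * Dᴴ) := by rw [← hSdef, hDtD]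
          _ = ((Dᴴ)ᵀ * Dᵀ) * (D * Dᴴ) := by simp only [mul_assoc]
          _ = (D * Dᴴ)ᵀ * (D * Dᴴ) := by rw [Matrix.transpose_mul]
          _ = 1 := by rw [hDDH, Matrix.transpose_one, one_mul]
      have hWcs : star Wc * Wc = 1 := by
        have hsD : star (Dᴴ) = D := by
          rw [Matrix.star_eq_conjTranspose, Matrix.conjTranspose_conjTranspose]
        calc star Wc * Wc = (star (Dᴴ) * star U) * (U * Dᴴ) := by rw [hWcdef, Matrix.star_mul]
          _ = (D * star U) * (U * Dᴴ) := by rw [hsD]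
          _ = D * ((star U * U) * Dᴴ) := by simp only [mul_assoc]
          _ = 1 := by rw [hU2, one_mul, hDDH]
      have hWright : Wc * Wcᵀ = 1 := mul_eq_one_comm.mp hWct
      have hWH : Wcᴴ = Wcᵀ := by
        calc Wcᴴ = Wcᴴ * (Wc * Wcᵀ) := by rw [hWright, mul_one]
          _ = (Wcᴴ * Wc) * Wcᵀ := (mul_assoc _ _ _).symm
          _ = Wcᵀ := by
              rw [show Wcᴴ * Wc = 1 from by
                rw [← Matrix.star_eq_conjTranspose]; exact hWcs, one_mul]
      have hreal : ∀ i j, ((Wc i j).re : ℂ) = Wc i j := by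
        intro i j
        have h1 := congrFun (congrFun hWH j) i
        simp only [Matrix.conjTranspose_apply, Matrix.transpose_apply] at h1
        exact Complex.conj_eq_iff_re.mp h1
      set W := Wc.map Complex.re with hWdef
      have hWmap : W.map (fun x:ℝ => (x:ℂ)) = Wc := by
        ext i j
        simp only [hWdef, Matrix.map_apply]
        exact hreal i j
      have hWrealo : Wᵀ * W = 1 := by
        apply map_inj'
        rw [mapC_mul, mapC_transpose, hWmap, mapC_one, hWct]
      have hWo : W ∈ Matrix.orthogonalGroup (Fin d ⊕ Fin d) ℝ := by
        rw [Matrix.mem_orthogonalGroup_iff']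
        simpa using hWrealo
      refine ⟨W, V₁, V₂, σ₁, σ₂, hWo, hV₁o, hV₂o, hσ₁n, hσ₂n, ?_⟩
      rw [hWmap, ← hE₁def, ← hE₂def, ← hDdef]
      exact hUW
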